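/- Let d ≥ 1 and let p_1, …, p_d ∈ ℝ^d be linearly independent unit vectors; let σ_min and σ_max denote the smallest and largest eigenvalues of the Gram matrix (⟨p_i, p_j⟩)_{i,j=1,…,d}. Then there exist constants c > 0 and c', κ > 1, depending only on d, σ_min and σ_max, such that the following holds: for every z ∈ ℝ^d, every ρ > 0, and every choice of points y_1, …, y_d ∈ ℝ^d with y_i − z a positive scalar multiple of p_i and cρ ≤ ‖y_i − z‖ ≤ 2cρ for each i, setting t = κ^{-1}ρ², the map Φ : ℝ^d → ℝ^d defined by Φ(x) = (ρ^d K_t(x, y_1), …, ρ^d K_t(x, y_d)) satisfies, for all x_1, x_2 in the ball B(z, κ^{-1}ρ), the two-sided bound (κ c')^{-1} ρ^{-1} ‖x_1 − x_2‖ ≤ ‖Φ(x_1) − Φ(x_2)‖ ≤ κ c' ρ^{-1} ‖x_1 − x_2‖. -/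

import Mathlib

open scoped Real RealInnerProductSpace

/-- The Euclidean heat kernel on `ℝ^d`:
`K_t(x,y) = (4πt)^(-d/2) exp(-‖x-y‖²/(4t))`. -/
noncomputable def heatKernel (d : ℕ) (t : ℝ) (x y : EuclideanSpace ℝ (Fin d)) : ℝ :=
  (4 * Real.pi * t) ^ (-(d : ℝ) / 2) * Real.exp (-‖x - y‖ ^ 2 / (4 * t))


section Aux

variable {E : Type*} [NormedAddCommGroup E] [InnerProductSpace ℝ E]

lemma inner_add_sub_eq (a b : E) : ⟪a + b, a - b⟫ = ‖a‖ ^ 2 - ‖b‖ ^ 2 := by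
  simp only [inner_add_left, inner_sub_right, real_inner_self_eq_norm_sq, real_inner_comm]
  ring

lemma euclid_apply {d : ℕ} (w : Fin d → ℝ) (i : Fin d) :
    ((EuclideanSpace.equiv (Fin d) ℝ).symm w) i = w i := rfl

lemma euclid_norm_sq {d : ℕ} (w : Fin d → ℝ) :
    ‖(EuclideanSpace.equiv (Fin d) ℝ).symm w‖ ^ 2 = ∑ i, w i ^ 2 := by
  rw [EuclideanSpace.norm_eq, Real.sq_sqrt (by positivity)]
  simp [euclid_apply, sq_abs]

lemma euclid_norm_le {d : ℕ} (w : Fin d → ℝ) (b : ℝ) (hb : 0 ≤ b) (h : ∀ i, |w i| ≤ b) :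
    ‖(EuclideanSpace.equiv (Fin d) ℝ).symm w‖ ≤ Real.sqrt d * b := by
  have h2 : ‖(EuclideanSpace.equiv (Fin d) ℝ).symm w‖ ^ 2 ≤ d * b ^ 2 := by
    rw [euclid_norm_sq]
    calc ∑ i, w i ^ 2 ≤ ∑ _i : Fin d, b ^ 2 := by
          apply Finset.sum_le_sum
          intro i _
          have := h i
          nlinarith [abs_nonneg (w i), sq_abs (w i)]
      _ = d * b ^ 2 := by simp [Finset.sum_const, mul_comm]
  have hnn : (0:ℝ) ≤ Real.sqrt d * b := by positivity
  refine le_of_pow_le_pow_left₀ (n := 2) two_ne_zero hnn ?_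
  calc ‖(EuclideanSpace.equiv (Fin d) ℝ).symm w‖ ^ 2 ≤ d * b ^ 2 := h2
    _ = (Real.sqrt d * b) ^ 2 := by
        rw [mul_pow, Real.sq_sqrt (Nat.cast_nonneg d)]

lemma euclid_norm_ge {d : ℕ} (w : Fin d → ℝ) (b : ℝ) (hb : 0 ≤ b)
    (h : b ^ 2 ≤ ∑ i, w i ^ 2) :
    b ≤ ‖(EuclideanSpace.equiv (Fin d) ℝ).symm w‖ := by
  refine le_of_pow_le_pow_left₀ (n := 2) two_ne_zero (norm_nonneg _) ?_
  rw [euclid_norm_sq]; exact h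

lemma gram_lower {d : ℕ} (σ : ℝ) (hσ : 0 < σ)
    (p : Fin d → EuclideanSpace ℝ (Fin d)) (hli : LinearIndependent ℝ p)
    (hq : ∀ v : Fin d → ℝ, σ * ∑ i, v i ^ 2 ≤ ∑ i, ∑ j, v i * v j * ⟪p i, p j⟫)
    (v : EuclideanSpace ℝ (Fin d)) :
    σ * ‖v‖ ^ 2 ≤ ∑ i, ⟪p i, v⟫ ^ 2 := by
  rcases Nat.eq_zero_or_pos d with hd0 | hd0
  · subst hd0
    simp [Subsingleton.elim v 0]
  have : Nonempty (Fin d) := ⟨⟨0, hd0⟩⟩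
  have hcard : Fintype.card (Fin d) = Module.finrank ℝ (EuclideanSpace ℝ (Fin d)) := by
    simp [finrank_euclideanSpace]
  set b := basisOfLinearIndependentOfCardEqFinrank hli hcard with hbdef
  have hb : ⇑b = p := coe_basisOfLinearIndependentOfCardEqFinrank hli hcard
  set w : Fin d → ℝ := fun i => b.repr v i with hwdef
  have hv : ∑ i, w i • p i = v := by
    rw [← hb]; exact b.sum_repr v
  have h1 : ‖v‖ ^ 2 = ∑ i, w i * ⟪p i, v⟫ := by
    have hsi := sum_inner (𝕜 := ℝ) Finset.univ (fun i => w i • p i) v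
    rw [hv] at hsi
    rw [← real_inner_self_eq_norm_sq, hsi]
    apply Finset.sum_congr rfl
    intro i _
    rw [real_inner_smul_left]
  have h2 : σ * ∑ i, w i ^ 2 ≤ ‖v‖ ^ 2 := by
    have h3 : ∑ i, ∑ j, w i * w j * ⟪p i, p j⟫ = ‖v‖ ^ 2 := by
      rw [← real_inner_self_eq_norm_sq]
      conv_rhs => rw [← hv]
      rw [sum_inner]
      apply Finset.sum_congr rfl
      intro i _
      rw [inner_sum]
      apply Finset.sum_congr rfl
      intro j _
      rw [real_inner_smul_left, real_inner_smul_right]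
      ring
    rw [← h3]; exact hq w
  have hcs : (∑ i, w i * ⟪p i, v⟫) ^ 2 ≤ (∑ i, w i ^ 2) * ∑ i, ⟪p i, v⟫ ^ 2 :=
    Finset.sum_mul_sq_le_sq_mul_sq _ _ _
  rcases eq_or_lt_of_le (norm_nonneg v) with hv0 | hv0
  · rw [← hv0]
    have : (0:ℝ) ≤ ∑ i, ⟪p i, v⟫ ^ 2 := by positivity
    nlinarith
  have hX : (0:ℝ) ≤ ∑ i, ⟪p i, v⟫ ^ 2 := by positivity
  have hww : (0:ℝ) ≤ ∑ i, w i ^ 2 := by positivity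
  rw [← h1] at hcs
  have hN : 0 < ‖v‖ ^ 2 := pow_pos hv0 2
  nlinarith [mul_le_mul_of_nonneg_right h2 hX, mul_le_mul_of_nonneg_left hcs hσ.le]

end Aux


variable {E : Type*} [NormedAddCommGroup E] [InnerProductSpace ℝ E]

lemma inner_add_sub_eq' (a b : E) : ⟪a + b, a - b⟫ = ‖a‖ ^ 2 - ‖b‖ ^ 2 := by
  simp only [inner_add_left, inner_sub_right, real_inner_self_eq_norm_sq, real_inner_comm]
  ring

lemma algA (S ρ n : ℝ) (hS : S ≠ 0) (hρ : ρ ≠ 0) :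
    S ^ 2 / (4 * ρ ^ 2) * ((2 * (ρ / S ^ 2) + 2 * (2 * (ρ / S))) * n) = (1 / 2 + S) * (n / ρ) := by
  field_simp
  ring

lemma algB (S ρ : ℝ) (hS : S ≠ 0) : 2 * (ρ / S ^ 2) * S ^ 2 = 2 * ρ := by
  field_simp

lemma algC (S ρ : ℝ) (hS : S ≠ 0) (hρ : ρ ≠ 0) :
    S ^ 2 / (4 * ρ ^ 2) * ((ρ / S ^ 2 + 2 * (2 * (ρ / S))) * (ρ / S ^ 2))
      = 1 / (4 * S ^ 2) + 1 / S := by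
  field_simp; ring

lemma algD (S : ℝ) (hS : S ≠ 0) : 3 / 2 * S * (2 / S ^ 2) = 3 / S := by
  field_simp

lemma algE (S n ρ : ℝ) (hS : S ≠ 0) : 3 / S * (3 / 2 * S * (n / ρ)) = 9 / 2 * (n / ρ) := by
  have h : 3 / S * (3 / 2 * S * (n / ρ)) = (S / S) * (9 / 2 * (n / ρ)) := by ring
  rw [h, div_self hS, one_mul]

lemma algF (S n ρ : ℝ) (hS : S ≠ 0) : 3 / 2 * S * (n / ρ) * (2 * (2 / S)) = 6 * (n / ρ) := by
  have h : 3 / 2 * S * (n / ρ) * (2 * (2 / S)) = (S / S) * (6 * (n / ρ)) := by ring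
  rw [h, div_self hS, one_mul]

lemma algG (S ρ n : ℝ) (hS : S ≠ 0) (hρ : ρ ≠ 0) :
    S ^ 2 / (4 * ρ ^ 2) * (2 * (ρ / S ^ 2) * n) = 1 / 2 * (n / ρ) := by
  field_simp; ring

set_option maxHeartbeats 1000000 in
lemma coord_err (S ρ : ℝ) (hS : 4 ≤ S) (hρ : 0 < ρ)
    (z y x₁ x₂ : E)
    (hs₁ : ρ / S ≤ ‖y - z‖) (hs₂ : ‖y - z‖ ≤ 2 * (ρ / S))
    (hx₁ : ‖x₁ - z‖ ≤ ρ / S ^ 2) (hx₂ : ‖x₂ - z‖ ≤ ρ / S ^ 2) :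
    |Real.exp (-(S ^ 2 / (4 * ρ ^ 2)) * ‖x₁ - y‖ ^ 2)
      - Real.exp (-(S ^ 2 / (4 * ρ ^ 2)) * ‖x₂ - y‖ ^ 2)
      - 2 * (S ^ 2 / (4 * ρ ^ 2)) * Real.exp (-(S ^ 2 / (4 * ρ ^ 2)) * ‖y - z‖ ^ 2)
          * ⟪y - z, x₁ - x₂⟫| ≤ 20 / ρ * ‖x₁ - x₂‖ := by
  have hS0 : (0:ℝ) < S := by linarith
  have hρ' : ρ ≠ 0 := hρ.ne'
  have hS' : S ≠ 0 := hS0.ne'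
  set a : ℝ := S ^ 2 / (4 * ρ ^ 2) with ha_def
  have ha : 0 < a := by rw [ha_def]; positivity
  set s : ℝ := ‖y - z‖ with hs_def
  set u : E := x₁ - x₂ with hu_def
  set n : ℝ := ‖u‖ with hn_def
  have hn0 : 0 ≤ n := by rw [hn_def]; exact norm_nonneg u
  have hs0 : 0 < s := lt_of_lt_of_le (by positivity) hs₁
  -- scalar quantities
  set Q : ℝ := ‖x₁ - y‖ ^ 2 - ‖x₂ - y‖ ^ 2 with hQ_def
  set R : ℝ := ‖x₂ - y‖ ^ 2 - s ^ 2 with hR_def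
  set W : ℝ := ⟪(x₁ - z) + (x₂ - z), u⟫ with hW_def
  set Y : ℝ := ⟪y - z, u⟫ with hY_def
  clear_value a s u n Q R W Y
  -- identity for Q
  have hQ : Q = W - 2 * Y := by
    have h1 : ⟪(x₁ - y) + (x₂ - y), (x₁ - y) - (x₂ - y)⟫ = ‖x₁ - y‖ ^ 2 - ‖x₂ - y‖ ^ 2 :=
      inner_add_sub_eq' _ _
    have h2 : (x₁ - y) - (x₂ - y) = u := by rw [hu_def]; abel
    have h3 : (x₁ - y) + (x₂ - y) = ((x₁ - z) + (x₂ - z)) - (2:ℝ) • (y - z) := by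
      rw [two_smul]; abel
    rw [h2, h3, inner_sub_left, inner_smul_left] at h1
    simp only [starRingEnd_apply, star_trivial] at h1
    rw [hQ_def, ← h1, hW_def, hY_def]
  -- identity for R
  have hR : R = ⟪(x₂ - y) + (z - y), x₂ - z⟫ := by
    have h1 : ⟪(x₂ - y) + (z - y), (x₂ - y) - (z - y)⟫ = ‖x₂ - y‖ ^ 2 - ‖z - y‖ ^ 2 :=
      inner_add_sub_eq' _ _
    have h2 : (x₂ - y) - (z - y) = x₂ - z := by abel
    have h3 : ‖z - y‖ = s := by rw [hs_def, norm_sub_rev]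
    rw [h2, h3] at h1
    rw [hR_def, ← h1]
  -- basic norm bounds
  have hnu : n ≤ 2 * (ρ / S ^ 2) := by
    have : x₁ - x₂ = (x₁ - z) - (x₂ - z) := by abel
    rw [hn_def, hu_def, this]
    calc ‖(x₁ - z) - (x₂ - z)‖ ≤ ‖x₁ - z‖ + ‖x₂ - z‖ := norm_sub_le _ _
      _ ≤ 2 * (ρ / S ^ 2) := by linarith
  have hW : |W| ≤ 2 * (ρ / S ^ 2) * n := by
    rw [hW_def, hn_def]
    calc |(⟪(x₁ - z) + (x₂ - z), u⟫ : ℝ)| ≤ ‖(x₁ - z) + (x₂ - z)‖ * ‖u‖ :=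
          abs_real_inner_le_norm _ _
      _ ≤ (‖x₁ - z‖ + ‖x₂ - z‖) * ‖u‖ :=
          mul_le_mul_of_nonneg_right (norm_add_le _ _) (norm_nonneg u)
      _ ≤ 2 * (ρ / S ^ 2) * ‖u‖ :=
          mul_le_mul_of_nonneg_right (by linarith) (norm_nonneg u)
  have hY : |Y| ≤ s * n := by
    rw [hY_def, hn_def, hs_def]
    exact abs_real_inner_le_norm _ _
  have hQb : |Q| ≤ (2 * (ρ / S ^ 2) + 2 * s) * n := by
    rw [hQ]
    calc |W - 2 * Y| ≤ |W| + 2 * |Y| := by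
          calc |W - 2 * Y| ≤ |W| + |2 * Y| := abs_sub _ _
            _ = |W| + 2 * |Y| := by rw [abs_mul]; norm_num
      _ ≤ 2 * (ρ / S ^ 2) * n + 2 * (s * n) := by linarith
      _ = (2 * (ρ / S ^ 2) + 2 * s) * n := by ring
  have hRb : |R| ≤ (ρ / S ^ 2 + 2 * s) * (ρ / S ^ 2) := by
    rw [hR]
    calc |(⟪(x₂ - y) + (z - y), x₂ - z⟫ : ℝ)| ≤ ‖(x₂ - y) + (z - y)‖ * ‖x₂ - z‖ :=
          abs_real_inner_le_norm _ _
      _ ≤ (ρ / S ^ 2 + 2 * s) * (ρ / S ^ 2) := by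
          have hb1 : ‖x₂ - y‖ ≤ ρ / S ^ 2 + s := by
            have : x₂ - y = (x₂ - z) - (y - z) := by abel
            rw [this]
            calc ‖(x₂ - z) - (y - z)‖ ≤ ‖x₂ - z‖ + ‖y - z‖ := norm_sub_le _ _
              _ ≤ ρ / S ^ 2 + s := by rw [← hs_def]; linarith
          have hb2 : ‖z - y‖ = s := by rw [hs_def, norm_sub_rev]
          have hb3 : ‖(x₂ - y) + (z - y)‖ ≤ ρ / S ^ 2 + 2 * s := by
            calc ‖(x₂ - y) + (z - y)‖ ≤ ‖x₂ - y‖ + ‖z - y‖ := norm_add_le _ _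
              _ ≤ ρ / S ^ 2 + 2 * s := by rw [hb2]; linarith
          have h0 : (0:ℝ) ≤ ρ / S ^ 2 + 2 * s := by positivity
          apply mul_le_mul hb3 hx₂ (norm_nonneg _) h0
  -- D and A bounds
  set D : ℝ := a * Q with hD_def
  set A : ℝ := a * R with hA_def
  clear_value D A
  have hsn : s ≤ 2 * (ρ / S) := hs₂
  have hD1 : |D| ≤ 3 / 2 * S * (n / ρ) := by
    have h1 : |D| = a * |Q| := by rw [hD_def, abs_mul, abs_of_pos ha]
    have h2 : a * |Q| ≤ a * ((2 * (ρ / S ^ 2) + 2 * (2 * (ρ / S))) * n) := by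
      apply mul_le_mul_of_nonneg_left _ ha.le
      calc |Q| ≤ (2 * (ρ / S ^ 2) + 2 * s) * n := hQb
        _ ≤ (2 * (ρ / S ^ 2) + 2 * (2 * (ρ / S))) * n :=
            mul_le_mul_of_nonneg_right (by linarith) hn0
    have h3 : a * ((2 * (ρ / S ^ 2) + 2 * (2 * (ρ / S))) * n) = (1 / 2 + S) * (n / ρ) := by
      rw [ha_def]; exact algA S ρ n hS' hρ'
    have h4 : (1 / 2 + S) * (n / ρ) ≤ 3 / 2 * S * (n / ρ) :=
      mul_le_mul_of_nonneg_right (by linarith) (div_nonneg hn0 hρ.le)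
    linarith
  have hnρ : n / ρ ≤ 2 / S ^ 2 := by
    rw [div_le_div_iff₀ hρ (by positivity)]
    calc n * S ^ 2 ≤ 2 * (ρ / S ^ 2) * S ^ 2 :=
          mul_le_mul_of_nonneg_right hnu (sq_nonneg S)
      _ = 2 * ρ := algB S ρ hS'
  have hD2 : |D| ≤ 3 / S := by
    calc |D| ≤ 3 / 2 * S * (n / ρ) := hD1
      _ ≤ 3 / 2 * S * (2 / S ^ 2) := by
          apply mul_le_mul_of_nonneg_left hnρ (by positivity)
      _ = 3 / S := algD S hS'
  have hD3 : |D| ≤ 3 / 4 := by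
    calc |D| ≤ 3 / S := hD2
      _ ≤ 3 / 4 := by
          apply div_le_div_of_nonneg_left (by norm_num) (by norm_num) hS
  have hA1 : |A| ≤ 2 / S := by
    have h1 : |A| = a * |R| := by rw [hA_def, abs_mul, abs_of_pos ha]
    have h2 : a * |R| ≤ a * ((ρ / S ^ 2 + 2 * (2 * (ρ / S))) * (ρ / S ^ 2)) := by
      apply mul_le_mul_of_nonneg_left _ ha.le
      calc |R| ≤ (ρ / S ^ 2 + 2 * s) * (ρ / S ^ 2) := hRb
        _ ≤ (ρ / S ^ 2 + 2 * (2 * (ρ / S))) * (ρ / S ^ 2) :=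
            mul_le_mul_of_nonneg_right (by linarith) (by positivity)
    have h3 : a * ((ρ / S ^ 2 + 2 * (2 * (ρ / S))) * (ρ / S ^ 2)) = 1 / (4 * S ^ 2) + 1 / S := by
      rw [ha_def]; exact algC S ρ hS' hρ'
    have h4 : 1 / (4 * S ^ 2) + 1 / S ≤ 2 / S := by
      rw [div_add_div _ _ (by positivity) hS', div_le_div_iff₀ (by positivity) hS0]
      nlinarith
    linarith
  have hA2 : |A| ≤ 1 / 2 := by
    calc |A| ≤ 2 / S := hA1
      _ ≤ 1 / 2 := by rw [div_le_div_iff₀ hS0 (by norm_num)]; linarith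
  -- exponential identities
  have hq1 : -a * ‖x₁ - y‖ ^ 2 = (-(a * s ^ 2) + -A) + -D := by
    rw [hA_def, hD_def, hR_def, hQ_def]; ring
  have hq2 : -a * ‖x₂ - y‖ ^ 2 = -(a * s ^ 2) + -A := by
    rw [hA_def, hR_def]; ring
  have e1 : Real.exp (-a * ‖x₁ - y‖ ^ 2)
      = Real.exp (-(a * s ^ 2)) * Real.exp (-A) * Real.exp (-D) := by
    rw [hq1, Real.exp_add, Real.exp_add]
  have e2 : Real.exp (-a * ‖x₂ - y‖ ^ 2) = Real.exp (-(a * s ^ 2)) * Real.exp (-A) := by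
    rw [hq2, Real.exp_add]
  have hDval : 2 * a * Y = a * W - D := by
    rw [hD_def, hQ]; ring
  have hexp_s : Real.exp (-a * s ^ 2) = Real.exp (-(a * s ^ 2)) := by rw [neg_mul]
  -- main algebraic identity
  have main : Real.exp (-a * ‖x₁ - y‖ ^ 2) - Real.exp (-a * ‖x₂ - y‖ ^ 2)
      - 2 * a * Real.exp (-a * s ^ 2) * Y
      = Real.exp (-(a * s ^ 2)) * (Real.exp (-A) * (Real.exp (-D) - 1 + D)
          + D * (1 - Real.exp (-A)) - a * W) := by
    rw [e1, e2, hexp_s]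
    have : 2 * a * Real.exp (-(a * s ^ 2)) * Y = Real.exp (-(a * s ^ 2)) * (2 * a * Y) := by ring
    rw [this, hDval]
    ring
  rw [main]
  -- final estimates
  have hB : Real.exp (-(a * s ^ 2)) ≤ 1 := by
    rw [Real.exp_le_one_iff]
    have := mul_pos ha (pow_pos hs0 2)
    linarith
  have hB0 : 0 < Real.exp (-(a * s ^ 2)) := Real.exp_pos _
  have hT1 : |Real.exp (-A) * (Real.exp (-D) - 1 + D)| ≤ 27 / 2 * (n / ρ) := by
    have h1 : |Real.exp (-D) - 1 + D| ≤ D ^ 2 := by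
      have := Real.abs_exp_sub_one_sub_id_le (x := -D) (by rw [abs_neg]; linarith)
      have h2 : Real.exp (-D) - 1 - -D = Real.exp (-D) - 1 + D := by ring
      rw [h2, neg_pow] at this
      simpa using this
    have h2 : Real.exp (-A) ≤ 3 := by
      calc Real.exp (-A) ≤ Real.exp 1 := by
            apply Real.exp_le_exp.mpr
            have := neg_abs_le A
            linarith [hA2]
        _ ≤ 3 := by linarith [Real.exp_one_lt_d9.le]
    have h3 : D ^ 2 ≤ 9 / 2 * (n / ρ) := by
      have := abs_nonneg D
      calc D ^ 2 = |D| * |D| := by rw [← sq_abs D, sq]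
        _ ≤ (3 / S) * (3 / 2 * S * (n / ρ)) := by
            apply mul_le_mul hD2 hD1 (abs_nonneg _) (by positivity)
        _ = 9 / 2 * (n / ρ) := algE S n ρ hS'
    calc |Real.exp (-A) * (Real.exp (-D) - 1 + D)| = Real.exp (-A) * |Real.exp (-D) - 1 + D| := by
          rw [abs_mul, abs_of_pos (Real.exp_pos _)]
      _ ≤ 3 * (9 / 2 * (n / ρ)) := by
          apply mul_le_mul h2 (h1.trans h3) (abs_nonneg _) (by norm_num)
      _ = 27 / 2 * (n / ρ) := by ring
  have hT2 : |D * (1 - Real.exp (-A))| ≤ 6 * (n / ρ) := by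
    have h1 : |1 - Real.exp (-A)| ≤ 2 * |A| := by
      have := Real.abs_exp_sub_one_le (x := -A) (by rw [abs_neg]; linarith)
      rw [abs_neg] at this
      rw [abs_sub_comm]
      exact this
    calc |D * (1 - Real.exp (-A))| = |D| * |1 - Real.exp (-A)| := abs_mul _ _
      _ ≤ (3 / 2 * S * (n / ρ)) * (2 * (2 / S)) := by
          apply mul_le_mul hD1 (by linarith) (abs_nonneg _) (by positivity)
      _ = 6 * (n / ρ) := algF S n ρ hS'
  have hT3 : |a * W| ≤ 1 / 2 * (n / ρ) := by
    have h1 : |a * W| = a * |W| := by rw [abs_mul, abs_of_pos ha]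
    have h2 : a * |W| ≤ a * (2 * (ρ / S ^ 2) * n) := mul_le_mul_of_nonneg_left hW ha.le
    have h3 : a * (2 * (ρ / S ^ 2) * n) = 1 / 2 * (n / ρ) := by
      rw [ha_def]; exact algG S ρ n hS' hρ'
    linarith
  calc |Real.exp (-(a * s ^ 2)) * (Real.exp (-A) * (Real.exp (-D) - 1 + D)
          + D * (1 - Real.exp (-A)) - a * W)|
      = Real.exp (-(a * s ^ 2)) * |Real.exp (-A) * (Real.exp (-D) - 1 + D)
          + D * (1 - Real.exp (-A)) - a * W| := by rw [abs_mul, abs_of_pos hB0]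
    _ ≤ 1 * (|Real.exp (-A) * (Real.exp (-D) - 1 + D)| + |D * (1 - Real.exp (-A))| + |a * W|) := by
        apply mul_le_mul hB _ (abs_nonneg _) (by norm_num)
        calc |Real.exp (-A) * (Real.exp (-D) - 1 + D) + D * (1 - Real.exp (-A)) - a * W|
            ≤ |Real.exp (-A) * (Real.exp (-D) - 1 + D) + D * (1 - Real.exp (-A))| + |a * W| :=
              abs_sub _ _
          _ ≤ |Real.exp (-A) * (Real.exp (-D) - 1 + D)| + |D * (1 - Real.exp (-A))| + |a * W| := by
              linarith [abs_add_le (Real.exp (-A) * (Real.exp (-D) - 1 + D))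
                (D * (1 - Real.exp (-A)))]
    _ ≤ 1 * (27 / 2 * (n / ρ) + 6 * (n / ρ) + 1 / 2 * (n / ρ)) := by
        apply mul_le_mul_of_nonneg_left _ (by norm_num)
        linarith
    _ = 20 / ρ * n := by ring


lemma rpow_sq_neg (dd : ℕ) (ρ : ℝ) (hρ : 0 < ρ) :
    (ρ ^ 2) ^ (-(dd : ℝ) / 2) = (ρ ^ dd)⁻¹ := by
  rw [← Real.rpow_natCast ρ 2, ← Real.rpow_mul hρ.le]
  have h : ((2 : ℕ) : ℝ) * (-(dd : ℝ) / 2) = -(dd : ℝ) := by push_cast; ring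
  rw [h, Real.rpow_neg hρ.le, Real.rpow_natCast]

lemma prefactor_eq (dd : ℕ) (κ ρ : ℝ) (hκ : 0 < κ) (hρ : 0 < ρ) :
    (ρ : ℝ) ^ dd * (4 * Real.pi * (κ⁻¹ * ρ ^ 2)) ^ (-(dd : ℝ) / 2)
      = (κ / (4 * Real.pi)) ^ ((dd : ℝ) / 2) := by
  have hπ := Real.pi_pos
  have hbase : (0 : ℝ) < κ / (4 * Real.pi) := by positivity
  have h1 : 4 * Real.pi * (κ⁻¹ * ρ ^ 2) = (κ / (4 * Real.pi))⁻¹ * ρ ^ 2 := by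
    field_simp
  rw [h1, Real.mul_rpow (by positivity) (by positivity), rpow_sq_neg dd ρ hρ,
    Real.inv_rpow hbase.le]
  have h2 : -(dd : ℝ) / 2 = -((dd : ℝ) / 2) := by ring
  rw [h2, Real.rpow_neg hbase.le, inv_inv]
  field_simp

lemma exp_arg_eq (κ ρ q : ℝ) (hκ : κ ≠ 0) (hρ : ρ ≠ 0) :
    -q / (4 * (κ⁻¹ * ρ ^ 2)) = -(κ / (4 * ρ ^ 2)) * q := by
  field_simp


lemma algH (S ρ : ℝ) (hS : S ≠ 0) (hρ : ρ ≠ 0) :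
    2 * (S ^ 2 / (4 * ρ ^ 2)) * (1 / 3 * (ρ / S)) = S / (6 * ρ) := by
  field_simp
  ring

lemma algI (S ρ : ℝ) (hS : S ≠ 0) (hρ : ρ ≠ 0) :
    2 * (S ^ 2 / (4 * ρ ^ 2)) * (2 * (ρ / S)) = S / ρ := by
  field_simp
  ring

lemma algJ (S ρ : ℝ) (hS : S ≠ 0) (hρ : ρ ≠ 0) :
    S ^ 2 / (4 * ρ ^ 2) * (2 * (ρ / S)) ^ 2 = 1 := by
  field_simp
  ring


set_option maxHeartbeats 1000000 in
/-- Heat Triangulation Theorem in Euclidean space: for linearly independent unit directions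
`p₁, …, p_d` whose Gram matrix has smallest (resp. largest) eigenvalue bounded below by
`σmin > 0` (resp. above by `σmax`), there are constants `c > 0`, `c', κ > 1`, depending only
on `d, σmin, σmax`, such that for every `z`, `ρ > 0`, and points `y_i` lying in the direction
`p_i` from `z` with `cρ ≤ ‖y_i - z‖ ≤ 2cρ`, the map
`Φ(x) = (ρ^d K_t(x,y₁), …, ρ^d K_t(x,y_d))` with `t = κ⁻¹ρ²` satisfies
`(κ c')⁻¹ ρ⁻¹ ‖x₁ - x₂‖ ≤ ‖Φ(x₁) - Φ(x₂)‖ ≤ κ c' ρ⁻¹ ‖x₁ - x₂‖` on `B(z, κ⁻¹ρ)`. -/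
theorem heat_triangulation_euclidean (d : ℕ) (hd : 1 ≤ d) (σmin σmax : ℝ)
    (hσmin : 0 < σmin) (hσ : σmin ≤ σmax) :
    ∃ c c' κ : ℝ, 0 < c ∧ 1 < c' ∧ 1 < κ ∧
      ∀ p : Fin d → EuclideanSpace ℝ (Fin d),
        LinearIndependent ℝ p →
        (∀ i, ‖p i‖ = 1) →
        (∀ v : Fin d → ℝ,
          σmin * ∑ i, v i ^ 2 ≤ ∑ i, ∑ j, v i * v j * ⟪p i, p j⟫ ∧
            ∑ i, ∑ j, v i * v j * ⟪p i, p j⟫ ≤ σmax * ∑ i, v i ^ 2) →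
        ∀ (z : EuclideanSpace ℝ (Fin d)) (ρ : ℝ), 0 < ρ →
          ∀ y : Fin d → EuclideanSpace ℝ (Fin d),
            (∀ i, ∃ s : ℝ, 0 < s ∧ y i - z = s • p i) →
            (∀ i, c * ρ ≤ ‖y i - z‖ ∧ ‖y i - z‖ ≤ 2 * c * ρ) →
            ∀ x₁ ∈ Metric.ball z (κ⁻¹ * ρ), ∀ x₂ ∈ Metric.ball z (κ⁻¹ * ρ),
              (κ * c')⁻¹ * ρ⁻¹ * ‖x₁ - x₂‖ ≤
                  ‖((EuclideanSpace.equiv (Fin d) ℝ).symm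
                      (fun i => ρ ^ d * heatKernel d (κ⁻¹ * ρ ^ 2) x₁ (y i)) -
                    (EuclideanSpace.equiv (Fin d) ℝ).symm
                      (fun i => ρ ^ d * heatKernel d (κ⁻¹ * ρ ^ 2) x₂ (y i)))‖ ∧
                ‖((EuclideanSpace.equiv (Fin d) ℝ).symm
                      (fun i => ρ ^ d * heatKernel d (κ⁻¹ * ρ ^ 2) x₁ (y i)) -
                    (EuclideanSpace.equiv (Fin d) ℝ).symm
                      (fun i => ρ ^ d * heatKernel d (κ⁻¹ * ρ ^ 2) x₂ (y i)))‖ ≤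
                  κ * c' * ρ⁻¹ * ‖x₁ - x₂‖ := by
  have hd1 : (1 : ℝ) ≤ (d : ℝ) := by exact_mod_cast hd
  have hσ0' : 0 < σmin⁻¹ := inv_pos.mpr hσmin
  set κ : ℝ := 100000 * d * (1 + σmin⁻¹) with hκ_def
  have hκbig : (100000 : ℝ) ≤ κ := by rw [hκ_def]; nlinarith
  have hκ0 : (0 : ℝ) < κ := by linarith
  set S : ℝ := Real.sqrt κ with hS_def
  have hS0 : 0 < S := Real.sqrt_pos.mpr hκ0
  have hS2 : S ^ 2 = κ := Real.sq_sqrt hκ0.le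
  have hS20 : 20 ≤ S := by nlinarith [hS0.le]
  have hS4 : 4 ≤ S := by linarith
  set C₀ : ℝ := (κ / (4 * Real.pi)) ^ ((d : ℝ) / 2) with hC0_def
  have hπ := Real.pi_pos
  have hπ4 : 4 * Real.pi ≤ 16 := by nlinarith [Real.pi_le_four]
  have hC0pos : 0 < C₀ := by rw [hC0_def]; positivity
  have hC01 : 1 ≤ C₀ := by
    rw [hC0_def]
    apply Real.one_le_rpow _ (by positivity)
    rw [le_div_iff₀ (by linarith)]
    linarith
  have hsd1 : 1 ≤ Real.sqrt d := by
    rw [show (1 : ℝ) = Real.sqrt 1 from Real.sqrt_one.symm]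
    exact Real.sqrt_le_sqrt hd1
  have hsd0 : 0 ≤ Real.sqrt d := by linarith
  set c' : ℝ := 2 * Real.sqrt d * S * C₀ + 2 with hc'_def
  have hc'2 : 2 ≤ c' := by
    have h0 : 0 ≤ 2 * Real.sqrt d * S * C₀ := by
      exact mul_nonneg (mul_nonneg (by positivity) hS0.le) hC0pos.le
    rw [hc'_def]
    linarith
  have hσS : 240 * Real.sqrt d ≤ Real.sqrt σmin * S := by
    have h1 : σmin * κ = 100000 * d * (σmin + 1) := by
      rw [hκ_def]; field_simp
    have h2 : 57600 * (d : ℝ) ≤ σmin * κ := by nlinarith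
    have h3 : Real.sqrt (57600 * d) ≤ Real.sqrt (σmin * κ) := Real.sqrt_le_sqrt h2
    rw [Real.sqrt_mul (by norm_num) (d : ℝ), Real.sqrt_mul hσmin.le κ] at h3
    have h4 : Real.sqrt 57600 = 240 := by
      rw [show (57600 : ℝ) = 240 ^ 2 by norm_num]
      exact Real.sqrt_sq (by norm_num)
    rw [h4] at h3
    exact h3
  refine ⟨S⁻¹, c', κ, inv_pos.mpr hS0, by linarith, by linarith, ?_⟩
  intro p hli hunit hgram z ρ hρ y hdir hdist x₁ hx₁ x₂ hx₂
  have hρ' : ρ ≠ 0 := hρ.ne'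
  have hκρ : κ⁻¹ * ρ = ρ / S ^ 2 := by rw [hS2]; ring
  have hx₁n : ‖x₁ - z‖ ≤ ρ / S ^ 2 := by
    rw [← hκρ]
    have h := Metric.mem_ball.mp hx₁
    rw [dist_eq_norm] at h
    linarith
  have hx₂n : ‖x₂ - z‖ ≤ ρ / S ^ 2 := by
    rw [← hκρ]
    have h := Metric.mem_ball.mp hx₂
    rw [dist_eq_norm] at h
    linarith
  have hyd : ∀ i, ρ / S ≤ ‖y i - z‖ ∧ ‖y i - z‖ ≤ 2 * (ρ / S) := by
    intro i
    refine ⟨?_, ?_⟩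
    · calc ρ / S = S⁻¹ * ρ := by ring
        _ ≤ ‖y i - z‖ := (hdist i).1
    · calc ‖y i - z‖ ≤ 2 * S⁻¹ * ρ := (hdist i).2
        _ = 2 * (ρ / S) := by ring
  -- heat kernel in exponential-Gaussian form
  have hK : ∀ (x : EuclideanSpace ℝ (Fin d)) (i : Fin d),
      ρ ^ d * heatKernel d (κ⁻¹ * ρ ^ 2) x (y i)
        = C₀ * Real.exp (-(S ^ 2 / (4 * ρ ^ 2)) * ‖x - y i‖ ^ 2) := by
    intro x i
    simp only [heatKernel]
    rw [exp_arg_eq κ ρ (‖x - y i‖ ^ 2) hκ0.ne' hρ']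
    rw [← mul_assoc, prefactor_eq d κ ρ hκ0 hρ]
    rw [hC0_def, hS2]
  -- the difference vector in closed form
  set wf : Fin d → ℝ := fun i =>
    C₀ * (Real.exp (-(S ^ 2 / (4 * ρ ^ 2)) * ‖x₁ - y i‖ ^ 2)
      - Real.exp (-(S ^ 2 / (4 * ρ ^ 2)) * ‖x₂ - y i‖ ^ 2)) with hwf_def
  set mtf : Fin d → ℝ := fun i =>
    C₀ * (2 * (S ^ 2 / (4 * ρ ^ 2)) * Real.exp (-(S ^ 2 / (4 * ρ ^ 2)) * ‖y i - z‖ ^ 2)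
      * ⟪y i - z, x₁ - x₂⟫) with hmtf_def
  have hvec : (EuclideanSpace.equiv (Fin d) ℝ).symm
        (fun i => ρ ^ d * heatKernel d (κ⁻¹ * ρ ^ 2) x₁ (y i))
      - (EuclideanSpace.equiv (Fin d) ℝ).symm
        (fun i => ρ ^ d * heatKernel d (κ⁻¹ * ρ ^ 2) x₂ (y i))
      = (EuclideanSpace.equiv (Fin d) ℝ).symm wf := by
    rw [← map_sub]
    congr 1
    funext i
    simp only [Pi.sub_apply, hwf_def]
    rw [hK x₁ i, hK x₂ i]
    ring
  rw [hvec]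
  -- per-coordinate error bound
  have herr : ∀ i, |wf i - mtf i| ≤ C₀ * (20 / ρ * ‖x₁ - x₂‖) := by
    intro i
    have h := coord_err S ρ hS4 hρ z (y i) x₁ x₂ (hyd i).1 (hyd i).2 hx₁n hx₂n
    have heq : wf i - mtf i = C₀ * (Real.exp (-(S ^ 2 / (4 * ρ ^ 2)) * ‖x₁ - y i‖ ^ 2)
        - Real.exp (-(S ^ 2 / (4 * ρ ^ 2)) * ‖x₂ - y i‖ ^ 2)
        - 2 * (S ^ 2 / (4 * ρ ^ 2)) * Real.exp (-(S ^ 2 / (4 * ρ ^ 2)) * ‖y i - z‖ ^ 2)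
          * ⟪y i - z, x₁ - x₂⟫) := by
      simp only [hwf_def, hmtf_def]
      ring
    rw [heq, abs_mul, abs_of_pos hC0pos]
    exact mul_le_mul_of_nonneg_left h hC0pos.le
  have herrnn : (0 : ℝ) ≤ C₀ * (20 / ρ * ‖x₁ - x₂‖) := by
    exact mul_nonneg hC0pos.le (mul_nonneg (div_nonneg (by norm_num) hρ.le) (norm_nonneg _))
  have herrv : ‖(EuclideanSpace.equiv (Fin d) ℝ).symm wf
        - (EuclideanSpace.equiv (Fin d) ℝ).symm mtf‖
      ≤ Real.sqrt d * (C₀ * (20 / ρ * ‖x₁ - x₂‖)) := by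
    rw [← map_sub]
    apply euclid_norm_le _ _ herrnn
    intro i
    exact herr i
  -- mt coordinates in direction form
  have hcoord : ∀ i, mtf i
      = (C₀ * (2 * (S ^ 2 / (4 * ρ ^ 2)) * Real.exp (-(S ^ 2 / (4 * ρ ^ 2)) * ‖y i - z‖ ^ 2)
          * ‖y i - z‖)) * ⟪p i, x₁ - x₂⟫ := by
    intro i
    obtain ⟨si, hsip, hsie⟩ := hdir i
    have hn : ‖y i - z‖ = si := by
      rw [hsie, norm_smul, hunit i, mul_one, Real.norm_eq_abs, abs_of_pos hsip]
    have hip : (⟪y i - z, x₁ - x₂⟫ : ℝ) = ‖y i - z‖ * ⟪p i, x₁ - x₂⟫ := by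
      rw [hsie, real_inner_smul_left, norm_smul, hunit i, mul_one, Real.norm_eq_abs,
        abs_of_pos hsip]
    simp only [hmtf_def]
    rw [hip]
    ring
  -- coefficient bounds
  have ha0 : (0 : ℝ) < S ^ 2 / (4 * ρ ^ 2) := by positivity
  have hexp3 : Real.exp 1 ≤ 3 := by linarith [Real.exp_one_lt_d9.le]
  have hcoef_low : ∀ i, C₀ * (S / (6 * ρ))
      ≤ C₀ * (2 * (S ^ 2 / (4 * ρ ^ 2)) * Real.exp (-(S ^ 2 / (4 * ρ ^ 2)) * ‖y i - z‖ ^ 2)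
          * ‖y i - z‖) := by
    intro i
    apply mul_le_mul_of_nonneg_left _ hC0pos.le
    have hBlow : (1 : ℝ) / 3 ≤ Real.exp (-(S ^ 2 / (4 * ρ ^ 2)) * ‖y i - z‖ ^ 2) := by
      have h2 : ‖y i - z‖ ^ 2 ≤ (2 * (ρ / S)) ^ 2 := by
        exact pow_le_pow_left₀ (norm_nonneg _) (hyd i).2 2
      have h1 : S ^ 2 / (4 * ρ ^ 2) * ‖y i - z‖ ^ 2 ≤ 1 := by
        calc S ^ 2 / (4 * ρ ^ 2) * ‖y i - z‖ ^ 2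
            ≤ S ^ 2 / (4 * ρ ^ 2) * (2 * (ρ / S)) ^ 2 := mul_le_mul_of_nonneg_left h2 ha0.le
          _ = 1 := algJ S ρ hS0.ne' hρ'
      have h3 : (-1 : ℝ) ≤ -(S ^ 2 / (4 * ρ ^ 2)) * ‖y i - z‖ ^ 2 := by linarith
      calc (1 : ℝ) / 3 ≤ Real.exp (-1) := by
            rw [Real.exp_neg]
            have h5 : (3 : ℝ)⁻¹ ≤ (Real.exp 1)⁻¹ := inv_anti₀ (Real.exp_pos 1) hexp3
            calc (1 : ℝ) / 3 = (3 : ℝ)⁻¹ := by norm_num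
              _ ≤ (Real.exp 1)⁻¹ := h5
        _ ≤ Real.exp (-(S ^ 2 / (4 * ρ ^ 2)) * ‖y i - z‖ ^ 2) := Real.exp_le_exp.mpr h3
    calc S / (6 * ρ) = 2 * (S ^ 2 / (4 * ρ ^ 2)) * (1 / 3 * (ρ / S)) := by
          exact (algH S ρ hS0.ne' hρ').symm
      _ ≤ 2 * (S ^ 2 / (4 * ρ ^ 2))
          * (Real.exp (-(S ^ 2 / (4 * ρ ^ 2)) * ‖y i - z‖ ^ 2) * ‖y i - z‖) := by
          apply mul_le_mul_of_nonneg_left _ (by positivity)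
          apply mul_le_mul hBlow (hyd i).1 (by positivity) (Real.exp_pos _).le
      _ = 2 * (S ^ 2 / (4 * ρ ^ 2)) * Real.exp (-(S ^ 2 / (4 * ρ ^ 2)) * ‖y i - z‖ ^ 2)
          * ‖y i - z‖ := by ring
  have hcoef_high : ∀ i,
      C₀ * (2 * (S ^ 2 / (4 * ρ ^ 2)) * Real.exp (-(S ^ 2 / (4 * ρ ^ 2)) * ‖y i - z‖ ^ 2)
        * ‖y i - z‖) ≤ C₀ * (S / ρ) := by
    intro i
    apply mul_le_mul_of_nonneg_left _ hC0pos.le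
    have hB1 : Real.exp (-(S ^ 2 / (4 * ρ ^ 2)) * ‖y i - z‖ ^ 2) ≤ 1 := by
      rw [Real.exp_le_one_iff]
      have := mul_nonneg ha0.le (sq_nonneg ‖y i - z‖)
      linarith
    calc 2 * (S ^ 2 / (4 * ρ ^ 2)) * Real.exp (-(S ^ 2 / (4 * ρ ^ 2)) * ‖y i - z‖ ^ 2)
          * ‖y i - z‖
      _ = 2 * (S ^ 2 / (4 * ρ ^ 2))
          * (Real.exp (-(S ^ 2 / (4 * ρ ^ 2)) * ‖y i - z‖ ^ 2) * ‖y i - z‖) := by ring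
      _ ≤ 2 * (S ^ 2 / (4 * ρ ^ 2)) * (1 * (2 * (ρ / S))) := by
          apply mul_le_mul_of_nonneg_left _ (by positivity)
          apply mul_le_mul hB1 (hyd i).2 (norm_nonneg _) (by norm_num)
      _ = S / ρ := by rw [one_mul]; exact algI S ρ hS0.ne' hρ'
  -- lower bound for ‖mtf‖
  have hgl := gram_lower σmin hσmin p hli (fun v => (hgram v).1) (x₁ - x₂)
  have hcnn : (0 : ℝ) ≤ C₀ * (S / (6 * ρ)) := by
    exact mul_nonneg hC0pos.le (div_nonneg hS0.le (by linarith))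
  have hsum : (C₀ * (S / (6 * ρ))) ^ 2 * (σmin * ‖x₁ - x₂‖ ^ 2) ≤ ∑ i, mtf i ^ 2 := by
    calc (C₀ * (S / (6 * ρ))) ^ 2 * (σmin * ‖x₁ - x₂‖ ^ 2)
      _ ≤ (C₀ * (S / (6 * ρ))) ^ 2 * ∑ i, (⟪p i, x₁ - x₂⟫ : ℝ) ^ 2 := by
          exact mul_le_mul_of_nonneg_left hgl (sq_nonneg _)
      _ = ∑ i, (C₀ * (S / (6 * ρ))) ^ 2 * (⟪p i, x₁ - x₂⟫ : ℝ) ^ 2 := Finset.mul_sum _ _ _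
      _ ≤ ∑ i, mtf i ^ 2 := by
          apply Finset.sum_le_sum
          intro i _
          rw [hcoord i]
          calc (C₀ * (S / (6 * ρ))) ^ 2 * (⟪p i, x₁ - x₂⟫ : ℝ) ^ 2
            _ ≤ (C₀ * (2 * (S ^ 2 / (4 * ρ ^ 2))
                  * Real.exp (-(S ^ 2 / (4 * ρ ^ 2)) * ‖y i - z‖ ^ 2) * ‖y i - z‖)) ^ 2
                * (⟪p i, x₁ - x₂⟫ : ℝ) ^ 2 := by
                exact mul_le_mul_of_nonneg_right (pow_le_pow_left₀ hcnn (hcoef_low i) 2) (sq_nonneg _)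
            _ = (C₀ * (2 * (S ^ 2 / (4 * ρ ^ 2))
                  * Real.exp (-(S ^ 2 / (4 * ρ ^ 2)) * ‖y i - z‖ ^ 2) * ‖y i - z‖)
                * ⟪p i, x₁ - x₂⟫) ^ 2 := (mul_pow _ _ 2).symm
  have hmtlowv : C₀ * (Real.sqrt σmin * S / 6) * (‖x₁ - x₂‖ / ρ)
      ≤ ‖(EuclideanSpace.equiv (Fin d) ℝ).symm mtf‖ := by
    apply euclid_norm_ge
    · exact mul_nonneg (mul_nonneg hC0pos.le (by positivity))
        (div_nonneg (norm_nonneg _) hρ.le)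
    · have hb2 : (C₀ * (Real.sqrt σmin * S / 6) * (‖x₁ - x₂‖ / ρ)) ^ 2
          = (C₀ * (S / (6 * ρ))) ^ 2 * (σmin * ‖x₁ - x₂‖ ^ 2) := by
        have e1 : (C₀ * (Real.sqrt σmin * S / 6) * (‖x₁ - x₂‖ / ρ)) ^ 2
            = Real.sqrt σmin ^ 2 * (C₀ ^ 2 * S ^ 2 * ‖x₁ - x₂‖ ^ 2 / (36 * ρ ^ 2)) := by
          ring
        rw [e1, Real.sq_sqrt hσmin.le]
        ring
      rw [hb2]
      exact hsum
  -- upper bound for ‖mtf‖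
  have hmthighv : ‖(EuclideanSpace.equiv (Fin d) ℝ).symm mtf‖
      ≤ Real.sqrt d * (C₀ * (S / ρ) * ‖x₁ - x₂‖) := by
    apply euclid_norm_le
    · exact mul_nonneg (mul_nonneg hC0pos.le (div_nonneg hS0.le hρ.le)) (norm_nonneg _)
    · intro i
      have hcnn2 : (0 : ℝ) ≤ C₀ * (2 * (S ^ 2 / (4 * ρ ^ 2))
          * Real.exp (-(S ^ 2 / (4 * ρ ^ 2)) * ‖y i - z‖ ^ 2) * ‖y i - z‖) := by
        exact mul_nonneg hC0pos.le (by positivity)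
      rw [hcoord i, abs_mul, abs_of_nonneg hcnn2]
      have hip2 : |(⟪p i, x₁ - x₂⟫ : ℝ)| ≤ ‖x₁ - x₂‖ := by
        calc |(⟪p i, x₁ - x₂⟫ : ℝ)| ≤ ‖p i‖ * ‖x₁ - x₂‖ := abs_real_inner_le_norm _ _
          _ = ‖x₁ - x₂‖ := by rw [hunit i, one_mul]
      calc C₀ * (2 * (S ^ 2 / (4 * ρ ^ 2)) * Real.exp (-(S ^ 2 / (4 * ρ ^ 2)) * ‖y i - z‖ ^ 2)
            * ‖y i - z‖) * |(⟪p i, x₁ - x₂⟫ : ℝ)|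
        _ ≤ C₀ * (S / ρ) * ‖x₁ - x₂‖ := by
            exact mul_le_mul (hcoef_high i) hip2 (abs_nonneg _)
              (mul_nonneg hC0pos.le (div_nonneg hS0.le hρ.le))
  -- triangle inequalities
  have htri_low : ‖(EuclideanSpace.equiv (Fin d) ℝ).symm mtf‖
      - ‖(EuclideanSpace.equiv (Fin d) ℝ).symm wf - (EuclideanSpace.equiv (Fin d) ℝ).symm mtf‖
      ≤ ‖(EuclideanSpace.equiv (Fin d) ℝ).symm wf‖ := by
    have h1 := norm_sub_norm_le ((EuclideanSpace.equiv (Fin d) ℝ).symm mtf)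
      ((EuclideanSpace.equiv (Fin d) ℝ).symm wf)
    have h2 : ‖(EuclideanSpace.equiv (Fin d) ℝ).symm mtf
        - (EuclideanSpace.equiv (Fin d) ℝ).symm wf‖
        = ‖(EuclideanSpace.equiv (Fin d) ℝ).symm wf
        - (EuclideanSpace.equiv (Fin d) ℝ).symm mtf‖ := norm_sub_rev _ _
    linarith
  have htri_high : ‖(EuclideanSpace.equiv (Fin d) ℝ).symm wf‖
      ≤ ‖(EuclideanSpace.equiv (Fin d) ℝ).symm mtf‖
        + ‖(EuclideanSpace.equiv (Fin d) ℝ).symm wf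
          - (EuclideanSpace.equiv (Fin d) ℝ).symm mtf‖ := by
    calc ‖(EuclideanSpace.equiv (Fin d) ℝ).symm wf‖
      _ = ‖(EuclideanSpace.equiv (Fin d) ℝ).symm mtf
          + ((EuclideanSpace.equiv (Fin d) ℝ).symm wf
            - (EuclideanSpace.equiv (Fin d) ℝ).symm mtf)‖ := by congr 1; abel
      _ ≤ _ := norm_add_le _ _
  have hXρ : (0 : ℝ) ≤ ‖x₁ - x₂‖ / ρ := div_nonneg (norm_nonneg _) hρ.le
  constructor
  · -- lower bound
    have h20 : 20 * (‖x₁ - x₂‖ / ρ) ≤ ‖(EuclideanSpace.equiv (Fin d) ℝ).symm wf‖ := by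
      have e2 : Real.sqrt d * (C₀ * (20 / ρ * ‖x₁ - x₂‖))
          = C₀ * (20 * Real.sqrt d) * (‖x₁ - x₂‖ / ρ) := by ring
      have e3 : C₀ * (Real.sqrt σmin * S / 6) * (‖x₁ - x₂‖ / ρ)
          - C₀ * (20 * Real.sqrt d) * (‖x₁ - x₂‖ / ρ)
          = C₀ * (Real.sqrt σmin * S / 6 - 20 * Real.sqrt d) * (‖x₁ - x₂‖ / ρ) := by ring
      have hT : 20 ≤ Real.sqrt σmin * S / 6 - 20 * Real.sqrt d := by linarith
      have h5 : 20 ≤ C₀ * (Real.sqrt σmin * S / 6 - 20 * Real.sqrt d) := by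
        calc (20 : ℝ) ≤ Real.sqrt σmin * S / 6 - 20 * Real.sqrt d := hT
          _ = 1 * (Real.sqrt σmin * S / 6 - 20 * Real.sqrt d) := (one_mul _).symm
          _ ≤ C₀ * (Real.sqrt σmin * S / 6 - 20 * Real.sqrt d) := by
              exact mul_le_mul_of_nonneg_right hC01 (by linarith)
      have h6 : 20 * (‖x₁ - x₂‖ / ρ)
          ≤ C₀ * (Real.sqrt σmin * S / 6 - 20 * Real.sqrt d) * (‖x₁ - x₂‖ / ρ) := by
        exact mul_le_mul_of_nonneg_right h5 hXρ
      linarith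
    have hκc' : 1 ≤ κ * c' := by
      calc (1 : ℝ) = 1 * 1 := by norm_num
        _ ≤ κ * c' := mul_le_mul (by linarith) (by linarith) (by norm_num) (by linarith)
    have hinv1 : (κ * c')⁻¹ ≤ 1 := by
      have := inv_anti₀ one_pos hκc'
      simpa using this
    have hfin : (κ * c')⁻¹ * ρ⁻¹ * ‖x₁ - x₂‖ ≤ 20 * (‖x₁ - x₂‖ / ρ) := by
      calc (κ * c')⁻¹ * ρ⁻¹ * ‖x₁ - x₂‖ ≤ 1 * ρ⁻¹ * ‖x₁ - x₂‖ := by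
            apply mul_le_mul_of_nonneg_right
              (mul_le_mul_of_nonneg_right hinv1 (inv_nonneg.mpr hρ.le)) (norm_nonneg _)
        _ = 1 * (‖x₁ - x₂‖ / ρ) := by ring
        _ ≤ 20 * (‖x₁ - x₂‖ / ρ) := mul_le_mul_of_nonneg_right (by norm_num) hXρ
    linarith
  · -- upper bound
    have hup : ‖(EuclideanSpace.equiv (Fin d) ℝ).symm wf‖
        ≤ Real.sqrt d * (C₀ * (S / ρ) * ‖x₁ - x₂‖) + Real.sqrt d * (C₀ * (20 / ρ * ‖x₁ - x₂‖)) := by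
      exact le_trans htri_high (add_le_add hmthighv herrv)
    have e4 : Real.sqrt d * (C₀ * (S / ρ) * ‖x₁ - x₂‖) + Real.sqrt d * (C₀ * (20 / ρ * ‖x₁ - x₂‖))
        = (Real.sqrt d * C₀ * (S + 20)) * (‖x₁ - x₂‖ / ρ) := by ring
    have h2S : Real.sqrt d * C₀ * (S + 20) ≤ 2 * Real.sqrt d * S * C₀ := by
      have h0 : 0 ≤ Real.sqrt d * C₀ := mul_nonneg hsd0 hC0pos.le
      calc Real.sqrt d * C₀ * (S + 20) ≤ Real.sqrt d * C₀ * (2 * S) := by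
            exact mul_le_mul_of_nonneg_left (by linarith) h0
        _ = 2 * Real.sqrt d * S * C₀ := by ring
    have hκc : c' ≤ κ * c' := by
      have h0 : 0 ≤ (κ - 1) * c' := mul_nonneg (by linarith) (by linarith)
      nlinarith
    have hc'' : 2 * Real.sqrt d * S * C₀ ≤ κ * c' := by
      rw [hc'_def] at hκc ⊢
      linarith
    calc ‖(EuclideanSpace.equiv (Fin d) ℝ).symm wf‖
      _ ≤ (Real.sqrt d * C₀ * (S + 20)) * (‖x₁ - x₂‖ / ρ) := by rw [← e4]; exact hup
      _ ≤ (κ * c') * (‖x₁ - x₂‖ / ρ) := by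
          exact mul_le_mul_of_nonneg_right (le_trans h2S hc'') hXρ
      _ = κ * c' * ρ⁻¹ * ‖x₁ - x₂‖ := by ring
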